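/- Conversely, if V : ℝ → ℝ is differentiable, bounded, and satisfies V'(t) − V(t)/τ + R(t) = 0 for all t (zero TD error), with R continuous and bounded, then V(t) = ∫_t^∞ exp(−(s−t)/τ) R(s) ds for all t. -/

import Mathlib

open Real MeasureTheory

/-- Converse: a differentiable bounded V with zero TD error (for continuous
bounded R) equals the discounted integral of future rewards. -/
theorem stmt8 (τ : ℝ) (hτ : 0 < τ) (R : ℝ → ℝ) (hR : Continuous R)
    (hRbdd : ∃ M, ∀ t, |R t| ≤ M)
    (V : ℝ → ℝ) (hVdiff : Differentiable ℝ V) (hVbdd : ∃ C, ∀ t, |V t| ≤ C)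
    (hTD : ∀ t, deriv V t - V t / τ + R t = 0) :
    ∀ t, V t = ∫ s in Set.Ici t, Real.exp (-(s - t) / τ) * R s := by
  obtain ⟨M, hM⟩ := hRbdd
  obtain ⟨C, hC⟩ := hVbdd
  intro t
  set g : ℝ → ℝ := fun s => Real.exp (-s / τ) * R s with hg
  have hgcont : Continuous g := by
    exact (Real.continuous_exp.comp (continuous_id.neg.div_const τ)).mul hR
  -- derivative of W(u) = exp(-u/τ) V u is -(g u)
  have hWderiv : ∀ s, HasDerivAt (fun u => Real.exp (-u / τ) * V u) (-(g s)) s := by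
    intro s
    have h1 : HasDerivAt (fun u : ℝ => Real.exp (-u / τ)) (Real.exp (-s / τ) * (-1 / τ)) s := by
      have h0 : HasDerivAt (fun u : ℝ => -u / τ) (-1 / τ) s :=
        (hasDerivAt_id s).neg.div_const τ
      exact (Real.hasDerivAt_exp (-s / τ)).comp s h0
    have h2 := h1.mul (hVdiff s).hasDerivAt
    have hd : deriv V s = V s / τ - R s := by linarith [hTD s]
    refine h2.congr_deriv ?_
    rw [hd, hg]
    field_simp
    ring
  -- integrability
  have hgint : IntegrableOn g (Set.Ioi t) := by
    have hint : IntegrableOn (fun s => M * Real.exp (-(1 / τ) * s)) (Set.Ioi t) :=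
      (exp_neg_integrableOn_Ioi t (by positivity)).const_mul M
    refine MeasureTheory.Integrable.mono hint hgcont.aestronglyMeasurable.restrict ?_
    filter_upwards with s
    have hM0 : 0 ≤ M := le_trans (abs_nonneg _) (hM 0)
    have : |g s| ≤ Real.exp (-s / τ) * M := by
      rw [hg]
      simp only [abs_mul, Real.abs_exp]
      exact mul_le_mul_of_nonneg_left (hM s) (Real.exp_pos _).le
    calc ‖g s‖ = |g s| := rfl
      _ ≤ Real.exp (-s / τ) * M := this
      _ ≤ ‖M * Real.exp (-(1 / τ) * s)‖ := by
          rw [Real.norm_eq_abs, abs_mul, Real.abs_exp, abs_of_nonneg hM0]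
          have : -(1 / τ) * s = -s / τ := by ring
          rw [this]; ring_nf; rfl
  -- FTC on [t, T]
  have key : ∀ T : ℝ, ∫ s in t..T, g s
      = Real.exp (-t / τ) * V t - Real.exp (-T / τ) * V T := by
    intro T
    have h := intervalIntegral.integral_eq_sub_of_hasDerivAt
      (f := fun u => Real.exp (-u / τ) * V u) (f' := fun s => -(g s))
      (fun x _ => hWderiv x) (hgcont.neg.intervalIntegrable t T)
    have h2 : ∫ s in t..T, -(g s) = -∫ s in t..T, g s := intervalIntegral.integral_neg
    rw [h2] at h
    linarith [h]
  -- limit of boundary term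
  have hlim0 : Filter.Tendsto (fun T => Real.exp (-T / τ) * V T) Filter.atTop (nhds 0) := by
    apply squeeze_zero_norm (a := fun T => Real.exp (-T / τ) * C) (f := fun T => Real.exp (-T / τ) * V T)
    · intro T
      rw [Real.norm_eq_abs, abs_mul, Real.abs_exp]
      exact mul_le_mul_of_nonneg_left (hC T) (Real.exp_pos _).le
    · have h1 : Filter.Tendsto (fun T : ℝ => -T / τ) Filter.atTop Filter.atBot := by
        apply Filter.Tendsto.atBot_div_const hτ
        exact Filter.tendsto_neg_atBot_iff.mpr Filter.tendsto_id
      have h2 := Real.tendsto_exp_atBot.comp h1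
      simpa using h2.mul_const C
  -- limit of interval integrals
  have hlim1 : Filter.Tendsto (fun T => ∫ s in t..T, g s) Filter.atTop
      (nhds (∫ s in Set.Ioi t, g s)) :=
    intervalIntegral_tendsto_integral_Ioi t hgint Filter.tendsto_id
  have hlim2 : Filter.Tendsto (fun T => ∫ s in t..T, g s) Filter.atTop
      (nhds (Real.exp (-t / τ) * V t)) := by
    simp only [key]
    have := (tendsto_const_nhds (x := Real.exp (-t / τ) * V t)
      (f := Filter.atTop (α := ℝ))).sub hlim0
    simpa using this
  have hIoi : ∫ s in Set.Ioi t, g s = Real.exp (-t / τ) * V t :=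
    tendsto_nhds_unique hlim1 hlim2
  -- conclude
  have hIci : ∫ s in Set.Ici t, Real.exp (-(s - t) / τ) * R s
      = ∫ s in Set.Ioi t, Real.exp (-(s - t) / τ) * R s :=
    MeasureTheory.integral_Ici_eq_integral_Ioi
  rw [hIci]
  have hrw : ∀ s : ℝ, Real.exp (-(s - t) / τ) * R s = Real.exp (t / τ) * g s := by
    intro s
    rw [hg]
    rw [← mul_assoc, ← Real.exp_add]
    congr 2
    ring
  calc V t = Real.exp (t / τ) * (Real.exp (-t / τ) * V t) := by
        rw [← mul_assoc, ← Real.exp_add]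
        have h0 : t / τ + -t / τ = 0 := by ring
        rw [h0, Real.exp_zero, one_mul]
    _ = Real.exp (t / τ) * ∫ s in Set.Ioi t, g s := by rw [hIoi]
    _ = ∫ s in Set.Ioi t, Real.exp (t / τ) * g s := by
        rw [MeasureTheory.integral_const_mul]
    _ = ∫ s in Set.Ioi t, Real.exp (-(s - t) / τ) * R s := by
        apply MeasureTheory.setIntegral_congr_fun measurableSet_Ioi
        intro s _
        exact (hrw s).symm
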